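/- Let α ∈ ℝ_{>0}^d and define the d×d matrix Σ(α) with entries Σ_{ij}(α) = (α_i/‖α‖³)(δ_{ij}‖α‖ − α_j), where ‖α‖ = ∑_k α_k. Then the determinant of the (d−1)×(d−1) restriction Σ_{d-1}(α) (deleting the last row and column) equals (∏_{i=1}^d α_i/‖α‖) · ‖α‖^{-(d-1)}. -/

import Mathlib

open Finset

/-- the determinant of the restriction to the first `d−1` coordinates of
`Σᵢⱼ(α) = (αᵢ/‖α‖³)(δᵢⱼ‖α‖ − αⱼ)` equals `(∏ᵢ αᵢ/‖α‖) ‖α‖^{-(d-1)}`. -/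
theorem det_dirichlet_limit_covariance (d : ℕ) (hd : 1 ≤ d)
    (α : Fin d → ℝ) (hα : ∀ i, 0 < α i) :
    Matrix.det
      (Matrix.of (fun i j : Fin (d - 1) =>
        (α (Fin.castLE (Nat.sub_le d 1) i) / (∑ k, α k) ^ 3) *
          ((if i = j then (∑ k, α k) else 0) - α (Fin.castLE (Nat.sub_le d 1) j)))) =
    (∏ i, α i / ∑ k, α k) / (∑ k, α k) ^ (d - 1) := by
  cases d with
  | zero => omega
  | succ n =>
  set s : ℝ := ∑ k, α k with hs
  have hspos : 0 < s := Finset.sum_pos (fun i _ => hα i) ⟨0, mem_univ _⟩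
  have hsne : s ≠ 0 := hspos.ne'
  set a : Fin n → ℝ := fun i => α (Fin.castLE (Nat.sub_le (n+1) 1) i) with ha
  have hM : (Matrix.of (fun i j : Fin (n+1-1) =>
        (α (Fin.castLE (Nat.sub_le (n+1) 1) i) / s ^ 3) *
          ((if i = j then s else 0) - α (Fin.castLE (Nat.sub_le (n+1) 1) j)))) =
      Matrix.diagonal (fun i : Fin n => a i / s ^ 2) *
        (1 + Matrix.replicateCol Unit (fun _ => (-1:ℝ)) * Matrix.replicateRow Unit (fun j : Fin n => a j / s)) := by
    ext i j
    simp only [Matrix.of_apply, Matrix.mul_apply, Matrix.diagonal, Matrix.add_apply,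
      Matrix.one_apply, Matrix.replicateCol_apply, Matrix.replicateRow_apply, Finset.sum_ite_eq,
      Matrix.mul_apply, Finset.univ_unique, Finset.sum_singleton, Matrix.of_apply,
      Finset.mem_univ, if_true]
    by_cases h : i = j
    · simp [h]; field_simp; ring
    · simp [h]
      field_simp
      rfl
  rw [hM, Matrix.det_mul, Matrix.det_one_add_replicateCol_mul_replicateRow, Matrix.det_diagonal]
  have hcast : ∀ j : Fin n, Fin.castLE (Nat.sub_le (n+1) 1) j = Fin.castSucc j := by
    intro j; ext; rfl
  have hsum : ∑ j : Fin n, a j = s - α (Fin.last n) := by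
    rw [hs, Fin.sum_univ_castSucc]
    simp [ha, hcast]
  have hprod : ∏ i : Fin (n+1), α i = (∏ i : Fin n, a i) * α (Fin.last n) := by
    rw [Fin.prod_univ_castSucc]
    simp [ha, hcast]
  have hd2 : (∏ i : Fin n, a i / s ^ 2) = (∏ i : Fin n, a i) / s ^ (2*n) := by
    rw [Finset.prod_div_distrib, Finset.prod_const]
    simp [Fintype.card_fin, pow_mul]
  have hd3 : (∏ i : Fin (n+1), α i / s) = (∏ i : Fin (n+1), α i) / s ^ (n+1) := by
    rw [Finset.prod_div_distrib, Finset.prod_const]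
    simp [Fintype.card_fin]
  show (∏ i : Fin n, a i / s ^ 2) *
      (1 + dotProduct (fun j : Fin n => a j / s) (fun _ : Fin n => (-1:ℝ))) =
    (∏ i : Fin (n+1), α i / s) / s ^ n
  rw [hd2, hd3, hprod]
  have hdot : dotProduct (fun j : Fin n => a j / s) (fun _ : Fin n => (-1:ℝ)) =
      -((s - α (Fin.last n)) / s) := by
    simp [dotProduct, ← Finset.sum_div, hsum]
  rw [hdot]
  have : (1 : ℝ) + -((s - α (Fin.last n)) / s) = α (Fin.last n) / s := by
    field_simp
    ring
  rw [this]
  field_simp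
  ring
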